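/- The critical-point conditions Θ(θ_c) = 0 and Θ'(θ_c) = 0 for θ_c ∈ (0, π) with θ_c ≠ π/2 are satisfied exactly when (λ, η) = (± a sin²θ_c, -a² cos⁴θ_c). -/

import Mathlib

/-- The conditions `Θ(θ_c) = 0` and `Θ'(θ_c) = 0` for `θ_c ∈ (0, π)`, `θ_c ≠ π/2`, hold
exactly when `(λ, η) = (± a sin²θ_c, -a² cos⁴θ_c)`. -/
theorem stmt_9 (a lam η θc : ℝ) (ha : 0 < a) (hθc : θc ∈ Set.Ioo 0 Real.pi)
    (hθc' : θc ≠ Real.pi / 2) :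
    let Θ : ℝ → ℝ := fun θ => η + Real.cos θ ^ 2 * (a ^ 2 - lam ^ 2 / Real.sin θ ^ 2)
    (Θ θc = 0 ∧ deriv Θ θc = 0) ↔
      ((lam = a * Real.sin θc ^ 2 ∨ lam = -(a * Real.sin θc ^ 2)) ∧
        η = -(a ^ 2 * Real.cos θc ^ 4)) := by
  intro Θ
  have hs : Real.sin θc ≠ 0 := ne_of_gt (Real.sin_pos_of_pos_of_lt_pi hθc.1 hθc.2)
  have hc : Real.cos θc ≠ 0 := by
    intro h
    apply hθc'
    have h2 : Real.cos (Real.pi / 2) = 0 := Real.cos_pi_div_two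
    exact Real.injOn_cos ⟨le_of_lt hθc.1, le_of_lt hθc.2⟩
      ⟨by positivity, by linarith [Real.pi_pos]⟩ (h.trans h2.symm)
  have hsc : Real.sin θc ^ 2 + Real.cos θc ^ 2 = 1 := Real.sin_sq_add_cos_sq θc
  have hd : HasDerivAt Θ
      (0 + ((2 * Real.cos θc ^ 1 * (-Real.sin θc)) * (a ^ 2 - lam ^ 2 / Real.sin θc ^ 2) +
        Real.cos θc ^ 2 * (0 - ((0 * Real.sin θc ^ 2 - lam ^ 2 * (2 * Real.sin θc ^ 1 * Real.cos θc)) /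
          (Real.sin θc ^ 2) ^ 2)))) θc := by
    exact (hasDerivAt_const θc η).add
      (((Real.hasDerivAt_cos θc).pow 2).mul
        ((hasDerivAt_const θc (a ^ 2)).sub
          ((hasDerivAt_const θc (lam ^ 2)).div ((Real.hasDerivAt_sin θc).pow 2)
            (pow_ne_zero 2 hs))))
  have hD : deriv Θ θc = 0 + ((2 * Real.cos θc ^ 1 * (-Real.sin θc)) * (a ^ 2 - lam ^ 2 / Real.sin θc ^ 2) +
        Real.cos θc ^ 2 * (0 - ((0 * Real.sin θc ^ 2 - lam ^ 2 * (2 * Real.sin θc ^ 1 * Real.cos θc)) /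
          (Real.sin θc ^ 2) ^ 2))) := hd.deriv
  rw [hD]
  show (η + Real.cos θc ^ 2 * (a ^ 2 - lam ^ 2 / Real.sin θc ^ 2) = 0 ∧ _) ↔ _
  constructor
  · rintro ⟨h1, h2⟩
    have h2' : lam ^ 2 = a ^ 2 * (Real.sin θc ^ 2) ^ 2 := by
      field_simp at h2
      have hfac : (2 * Real.cos θc * Real.sin θc ^ 3) *
          (lam ^ 2 * (Real.sin θc ^ 2 + Real.cos θc ^ 2) - a ^ 2 * Real.sin θc ^ 4) = 0 := by
        linear_combination Real.sin θc ^ 3 * h2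
      have hne : (2 * Real.cos θc * Real.sin θc ^ 3) ≠ 0 := by
        simp [hc, hs]
      have := (mul_eq_zero.mp hfac).resolve_left hne
      rw [hsc] at this
      nlinarith [this]
    have hlam : lam = a * Real.sin θc ^ 2 ∨ lam = -(a * Real.sin θc ^ 2) := by
      have : lam * lam = (a * Real.sin θc ^ 2) * (a * Real.sin θc ^ 2) := by nlinarith
      exact mul_self_eq_mul_self_iff.mp this
    refine ⟨hlam, ?_⟩
    have h1' : η * Real.sin θc ^ 2 + Real.cos θc ^ 2 * (a ^ 2 * Real.sin θc ^ 2 - lam ^ 2) = 0 := by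
      field_simp at h1
      linear_combination h1
    have hfac : (η + a ^ 2 * Real.cos θc ^ 4) * Real.sin θc ^ 2 = 0 := by
      linear_combination h1' + Real.cos θc ^ 2 * h2' +
        a ^ 2 * Real.cos θc ^ 2 * Real.sin θc ^ 2 * hsc
    have := (mul_eq_zero.mp hfac).resolve_right (pow_ne_zero 2 hs)
    linarith
  · rintro ⟨hlam, hη⟩
    have h2' : lam ^ 2 = a ^ 2 * (Real.sin θc ^ 2) ^ 2 := by
      rcases hlam with h | h <;> rw [h] <;> ring
    constructor
    · rw [hη]
      field_simp
      linear_combination -Real.cos θc ^ 2 * h2' -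
        a ^ 2 * Real.cos θc ^ 2 * Real.sin θc ^ 2 * hsc
    · field_simp
      linear_combination (2 * Real.cos θc) * h2' +
        2 * Real.cos θc * lam ^ 2 * hsc
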